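/- arXiv:2001.01933 — 2 statements merged into one kernel-verified Lean document; each statement's English description precedes it below -/
import Mathlib

section
/- Fix a real constant 0 < c < 1 and an integer k ≥ 2, and set C = α(c)·k!/(1−c)^k. There exists a constant q = q(c,k) > 0 such that the following holds: for n ranging over values with cn ∈ ℕ, let t = cn, t' = t − k, and p_n = n^{−(k−1)}·(C + q·(1−c)^{−k}·k!·(log n)/n). If Δ ∼ RP(n,t,p_n), then the probability that Δ has a complete t'-skeleton tends to 1 as n → ∞. -/
open scoped Classical

noncomputable section

/-- The natural-log entropy function `α(c)`. -/
def entropy (c : ℝ) : ℝ := -c * Real.log c - (1 - c) * Real.log (1 - c)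

/-- The simplicial complex generated by a family `F` of facets: all nonempty
subsets of members of `F`. -/
def genComplex {n : ℕ} (F : Finset (Finset (Fin n))) : Finset (Finset (Fin n)) :=
  Finset.univ.filter (fun x => x.Nonempty ∧ ∃ f ∈ F, x ⊆ f)

/-- The probability, under the random pure model `RP(n,t,p)` (each `t`-subset of
`[n]` is taken as a facet independently with probability `p`), of the event `P`
for the generated complex. -/
def rpProb (n t : ℕ) (p : ℝ) (P : Finset (Finset (Fin n)) → Prop) : ℝ :=
  ∑ F ∈ (Finset.univ.filter (fun s : Finset (Fin n) => s.card = t)).powerset,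
    (if P (genComplex F) then p ^ F.card * (1 - p) ^ (Nat.choose n t - F.card) else 0)

lemma sum_all {β : Type*} [DecidableEq β] (S : Finset β) (p : ℝ) :
    ∑ F ∈ S.powerset, p ^ F.card * (1 - p) ^ (S.card - F.card) = 1 := by
  have h := Finset.prod_add (fun _ : β => p) (fun _ => 1 - p) S
  simp only [Finset.prod_const] at h
  have : ∀ F ∈ S.powerset, p ^ F.card * (1-p) ^ (S \ F).card
      = p ^ F.card * (1-p) ^ (S.card - F.card) := by
    intro F hF
    rw [Finset.card_sdiff_of_subset (Finset.mem_powerset.1 hF)]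
  rw [Finset.sum_congr rfl this] at h
  rw [← h]; norm_num

lemma sum_avoid {β : Type*} [DecidableEq β] (S T : Finset β) (hT : T ⊆ S) (p : ℝ) :
    ∑ F ∈ S.powerset, (if F ∩ T = ∅ then p ^ F.card * (1 - p) ^ (S.card - F.card) else 0)
      = (1 - p) ^ T.card := by
  rw [Finset.sum_ite, Finset.sum_const_zero, add_zero]
  have hfil : S.powerset.filter (fun F => F ∩ T = ∅) = (S \ T).powerset := by
    ext F
    simp only [Finset.mem_filter, Finset.mem_powerset, Finset.subset_sdiff,
      ← Finset.disjoint_iff_inter_eq_empty]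
  rw [hfil]
  have hcongr : ∀ F ∈ (S \ T).powerset,
      p ^ F.card * (1 - p) ^ (S.card - F.card)
        = (1-p)^T.card * (p ^ F.card * (1 - p) ^ ((S\T).card - F.card)) := by
    intro F hF
    rw [Finset.mem_powerset] at hF
    have h1 : F.card ≤ (S\T).card := Finset.card_le_card hF
    have h2 : (S\T).card = S.card - T.card := Finset.card_sdiff_of_subset hT
    have h3 : T.card ≤ S.card := Finset.card_le_card hT
    have : S.card - F.card = T.card + ((S\T).card - F.card) := by omega
    rw [this, pow_add]; ring
  rw [Finset.sum_congr rfl hcongr, ← Finset.mul_sum, sum_all]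
  ring


lemma choose_le_exp_entropy (c : ℝ) (hc0 : 0 < c) (hc1 : c < 1) (n t : ℕ)
    (ht : (t:ℝ) = c * n) (htn : t ≤ n) :
    (n.choose t : ℝ) ≤ Real.exp (n * entropy c) := by
  have h1c : (0:ℝ) < 1 - c := by linarith
  have key : c ^ t * (1-c) ^ (n-t) * n.choose t ≤ 1 := by
    have hb := add_pow c (1-c) n
    simp only [add_sub_cancel, one_pow] at hb
    have hmem : t ∈ Finset.range (n+1) := Finset.mem_range.2 (by omega)
    calc c ^ t * (1-c) ^ (n-t) * n.choose t
        ≤ ∑ i ∈ Finset.range (n+1), c ^ i * (1-c) ^ (n-i) * n.choose i :=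
          Finset.single_le_sum (f := fun i => c ^ i * (1-c) ^ (n-i) * (n.choose i : ℝ))
            (fun i _ => by positivity) hmem
      _ = 1 := hb.symm
  have hpos : (0:ℝ) < c ^ t * (1-c) ^ (n-t) := by positivity
  have h2 : (n.choose t : ℝ) ≤ (c ^ t * (1-c) ^ (n-t))⁻¹ := by
    rw [← one_div, le_div_iff₀ hpos]
    linarith [key, mul_comm (c ^ t * (1-c) ^ (n-t)) (n.choose t : ℝ)]
  refine h2.trans (le_of_eq ?_)
  have hct : c ^ t = Real.exp (t * Real.log c) := by
    rw [← Real.log_pow, Real.exp_log (by positivity)]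
  have hcnt : (1-c) ^ (n-t) = Real.exp ((n-t:ℕ) * Real.log (1-c)) := by
    rw [← Real.log_pow, Real.exp_log (by positivity)]
  have hnt : ((n-t:ℕ):ℝ) = (1-c) * n := by
    push_cast [htn]; linarith [ht]
  rw [hct, hcnt, ← Real.exp_add, ← Real.exp_neg, hnt, ht, entropy]
  ring_nf

lemma pow_le_descFactorial' (a : ℕ) : ∀ k : ℕ, a ^ k ≤ (a + k).descFactorial k
  | 0 => le_refl 1
  | (k+1) => by
    rw [show a + (k+1) = (a+k) + 1 by ring, Nat.succ_descFactorial_succ, pow_succ, mul_comm]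
    exact Nat.mul_le_mul (by omega) (pow_le_descFactorial' a k)

lemma pow_div_le_choose (a k : ℕ) : (a:ℝ) ^ k / k.factorial ≤ ((a+k).choose k : ℝ) := by
  rw [div_le_iff₀ (by positivity)]
  have := pow_le_descFactorial' a k
  rw [Nat.descFactorial_eq_factorial_mul_choose] at this
  calc (a:ℝ)^k ≤ ((k.factorial * (a+k).choose k : ℕ) : ℝ) := by exact_mod_cast this
    _ = ((a+k).choose k : ℝ) * k.factorial := by push_cast; ring

lemma choose_sub_le (c : ℝ) (hc0 : 0 < c) (hc1 : c < 1) (n t : ℕ)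
    (ht : (t:ℝ) = c * n) (hn : 1 ≤ n) :
    ∀ k : ℕ, k ≤ t → (n.choose (t-k) : ℝ) ≤ (c/(1-c))^k * n.choose t
  | 0, _ => by simp
  | (k+1), hkt => by
    have h1c : (0:ℝ) < 1 - c := by linarith
    have htn : t < n := by
      by_contra h
      push_neg at h
      have : (n:ℝ) ≤ t := Nat.cast_le.2 h
      have hn' : (0:ℝ) < n := by exact_mod_cast hn
      nlinarith [ht]
    have ih := choose_sub_le c hc0 hc1 n t ht hn k (by omega)
    set j := t - (k+1) with hj
    have hjk : j + 1 = t - k := by omega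
    have hid := Nat.choose_succ_right_eq n j
    rw [hjk] at hid
    -- (choose n (t-k)) * (t-k) = choose n j * (n - j)
    have hnj : (0:ℝ) < ((n - j : ℕ):ℝ) := by
      have : j < n := by omega
      exact_mod_cast Nat.sub_pos_of_lt this
    have hidR : (n.choose (t-k) : ℝ) * (t-k : ℕ) = (n.choose j : ℝ) * ((n - j : ℕ):ℝ) := by
      exact_mod_cast congrArg (Nat.cast (R := ℝ)) hid
    have hlow : (1-c) * n ≤ ((n - j : ℕ):ℝ) := by
      have : ((n - j : ℕ):ℝ) = (n:ℝ) - j := by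
        push_cast [show j ≤ n by omega]; ring
      rw [this]
      have : (j:ℝ) ≤ t := Nat.cast_le.2 (by omega)
      nlinarith [ht]
    have hup : ((t - k : ℕ):ℝ) ≤ c * n := by
      have : ((t-k:ℕ):ℝ) ≤ (t:ℝ) := Nat.cast_le.2 (by omega)
      linarith [ht]
    have hnpos : (0:ℝ) < n := by exact_mod_cast hn
    have hstep : (n.choose j : ℝ) ≤ (c/(1-c)) * n.choose (t-k) := by
      rw [div_mul_eq_mul_div, le_div_iff₀ h1c]
      have h0 : (0 ≤ (n.choose j : ℝ)) := Nat.cast_nonneg _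
      nlinarith [hidR, hlow, hup, (Nat.cast_nonneg (n.choose (t-k)) : (0:ℝ) ≤ _)]
    calc (n.choose j : ℝ) ≤ (c/(1-c)) * n.choose (t-k) := hstep
      _ ≤ (c/(1-c)) * ((c/(1-c))^k * n.choose t) := by
          have : (0:ℝ) ≤ c/(1-c) := by positivity
          nlinarith [ih]
      _ = (c/(1-c))^(k+1) * n.choose t := by ring


lemma union_bound (n t k : ℕ) (p : ℝ) (hp0 : 0 ≤ p) (hp1 : p ≤ 1)
    (htn : t ≤ n) (hkt : k ≤ t) :
    1 - (n.choose (t-k) : ℝ) * (1-p) ^ ((n-(t-k)).choose k) ≤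
      rpProb n t p
        (fun Δ => ∀ x : Finset (Fin n), x.Nonempty → x.card ≤ t - k → x ∈ Δ) := by
  set S : Finset (Finset (Fin n)) := Finset.univ.filter (fun s : Finset (Fin n) => s.card = t)
    with hS
  have hScard : S.card = n.choose t := by
    have : S = Finset.powersetCard t (Finset.univ : Finset (Fin n)) := by
      rw [Finset.powersetCard_eq_filter, Finset.powerset_univ]
    rw [this, Finset.card_powersetCard, Finset.card_univ, Fintype.card_fin]
  set w : Finset (Finset (Fin n)) → ℝ :=
    fun F => p ^ F.card * (1 - p) ^ (S.card - F.card) with hw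
  have hw0 : ∀ F, 0 ≤ w F := fun F =>
    mul_nonneg (pow_nonneg hp0 _) (pow_nonneg (by linarith) _)
  set P : Finset (Finset (Fin n)) → Prop :=
    fun Δ => ∀ x : Finset (Fin n), x.Nonempty → x.card ≤ t - k → x ∈ Δ with hP
  -- the t-k subsets
  set Y : Finset (Finset (Fin n)) := Finset.powersetCard (t-k) Finset.univ with hY
  set T : Finset (Fin n) → Finset (Finset (Fin n)) :=
    fun y => S.filter (fun s => y ⊆ s) with hT
  -- rewrite rpProb using w
  have hrp : rpProb n t p P = ∑ F ∈ S.powerset, (if P (genComplex F) then w F else 0) := by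
    rw [rpProb, ← hScard]
    refine Finset.sum_congr rfl fun F _ => ?_
    by_cases h : P (genComplex F) <;> simp [h, hw]
  have hone : (1:ℝ) = ∑ F ∈ S.powerset, w F := (sum_all S p).symm
  have key : ∑ F ∈ S.powerset, (if ¬ P (genComplex F) then w F else 0)
      ≤ (n.choose (t-k) : ℝ) * (1-p) ^ ((n-(t-k)).choose k) := by
    have step1 : ∀ F ∈ S.powerset, (if ¬ P (genComplex F) then w F else 0)
        ≤ ∑ y ∈ Y, (if F ∩ T y = ∅ then w F else 0) := by
      intro F hF
      by_cases hbad : ¬ P (genComplex F)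
      · simp only [hbad, if_true]
        -- find uncovered x
        simp only [hP] at hbad
        push_neg at hbad
        obtain ⟨x, hxne, hxcard, hxnot⟩ := hbad
        have hxnotc : ¬ ∃ f ∈ F, x ⊆ f := by
          intro hc
          exact hxnot (by simp [genComplex, hxne, hc])
        -- extend x to y of card t-k
        obtain ⟨y, hxy, -, hycard⟩ := Finset.exists_subsuperset_card_eq
          (Finset.subset_univ x) hxcard (by simp [Finset.card_univ]; omega)
        have hyY : y ∈ Y := by simp [hY, Finset.mem_powersetCard_univ, hycard]
        have hdisj : F ∩ T y = ∅ := by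
          rw [Finset.eq_empty_iff_forall_notMem]
          intro s hs
          rw [Finset.mem_inter, hT, Finset.mem_filter] at hs
          exact hxnotc ⟨s, hs.1, hxy.trans hs.2.2⟩
        calc w F = (if F ∩ T y = ∅ then w F else 0) := by rw [if_pos hdisj]
          _ ≤ _ := Finset.single_le_sum (f := fun y => if F ∩ T y = ∅ then w F else 0)
              (fun i _ => by by_cases h : F ∩ T i = ∅ <;> simp [h, hw0 F]) hyY
      · simp only [hbad, if_false]
        exact Finset.sum_nonneg fun y _ => by
          by_cases h : F ∩ T y = ∅ <;> simp [h, hw0 F]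
    calc ∑ F ∈ S.powerset, (if ¬ P (genComplex F) then w F else 0)
        ≤ ∑ F ∈ S.powerset, ∑ y ∈ Y, (if F ∩ T y = ∅ then w F else 0) :=
          Finset.sum_le_sum step1
      _ = ∑ y ∈ Y, ∑ F ∈ S.powerset, (if F ∩ T y = ∅ then w F else 0) := Finset.sum_comm
      _ = ∑ y ∈ Y, (1-p) ^ (T y).card := by
          refine Finset.sum_congr rfl fun y hy => ?_
          exact sum_avoid S (T y) (Finset.filter_subset _ _) p
      _ ≤ ∑ y ∈ Y, (1-p) ^ ((n-(t-k)).choose k) := by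
          refine Finset.sum_le_sum fun y hy => ?_
          refine pow_le_pow_of_le_one (by linarith) (by linarith) ?_
          rw [hY, Finset.mem_powersetCard_univ] at hy
          have hcard : ((Finset.univ : Finset (Fin n)) \ y).card = n - (t-k) := by
            rw [Finset.card_sdiff_of_subset (Finset.subset_univ y), Finset.card_univ,
              Fintype.card_fin, hy]
          calc (n-(t-k)).choose k = (Finset.powersetCard k ((Finset.univ : Finset (Fin n)) \ y)).card := by
                rw [Finset.card_powersetCard, hcard]
            _ ≤ (T y).card := by
                apply Finset.card_le_card_of_injOn (fun z => y ∪ z)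
                · intro z hz
                  rw [Finset.mem_coe, Finset.mem_powersetCard] at hz
                  obtain ⟨hzsub, hzcard⟩ := hz
                  have hdzy : Disjoint y z := by
                    refine Finset.disjoint_left.2 fun a ha ha' => ?_
                    exact (Finset.mem_sdiff.1 (hzsub ha')).2 ha
                  rw [hT]
                  simp only [Finset.mem_coe, Finset.mem_filter, hS, Finset.mem_univ, true_and]
                  constructor
                  · rw [Finset.card_union_of_disjoint hdzy, hy, hzcard]; omega
                  · exact Finset.subset_union_left
                · intro z1 hz1 z2 hz2 heq
                  simp only [Finset.mem_coe, Finset.mem_powersetCard] at hz1 hz2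
                  have e1 : (y ∪ z1) \ y = z1 := by
                    refine Finset.union_sdiff_cancel_left ?_
                    refine Finset.disjoint_left.2 fun a ha ha' => ?_
                    exact (Finset.mem_sdiff.1 (hz1.1 ha')).2 ha
                  have e2 : (y ∪ z2) \ y = z2 := by
                    refine Finset.union_sdiff_cancel_left ?_
                    refine Finset.disjoint_left.2 fun a ha ha' => ?_
                    exact (Finset.mem_sdiff.1 (hz2.1 ha')).2 ha
                  have heq' : y ∪ z1 = y ∪ z2 := heq
                  rw [← e1, ← e2, heq']
      _ = (n.choose (t-k) : ℝ) * (1-p) ^ ((n-(t-k)).choose k) := by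
          rw [Finset.sum_const, Finset.card_powersetCard, Finset.card_univ,
            Fintype.card_fin, nsmul_eq_mul]
  rw [hrp]
  have hsplit : ∑ F ∈ S.powerset, w F
      = (∑ F ∈ S.powerset, (if P (genComplex F) then w F else 0))
        + ∑ F ∈ S.powerset, (if ¬ P (genComplex F) then w F else 0) := by
    rw [← Finset.sum_add_distrib]
    refine Finset.sum_congr rfl fun F _ => ?_
    by_cases h : P (genComplex F)
    · rw [if_pos h, if_neg (not_not_intro h)]; ring
    · rw [if_neg h, if_pos h]; ring
  rw [hsplit] at hone
  linarith [key]


/-- For constants `0 < c < 1`, `k ≥ 2`, with `C = α(c)·k!/(1-c)^k`, there is a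
constant `q > 0` so that for `t = cn`, `t' = t - k` and
`p = n^{-(k-1)}(C + q(1-c)^{-k} k! log n / n)`, the complex `Δ ~ RP(n,t,p)` has
a complete `t'`-skeleton with high probability. -/
theorem stmt1 (c : ℝ) (hc0 : 0 < c) (hc1 : c < 1) (k : ℕ) (hk : 2 ≤ k) :
    ∃ q : ℝ, 0 < q ∧
      ∀ ε : ℝ, 0 < ε → ∃ N : ℕ, ∀ n : ℕ, N ≤ n → ∀ t : ℕ, (t : ℝ) = c * n →
        1 - ε ≤ rpProb n t
          ((1 / (n : ℝ) ^ (k - 1)) *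
            (entropy c * k.factorial / (1 - c) ^ k +
              q * (k.factorial : ℝ) / (1 - c) ^ k * Real.log n / n))
          (fun Δ => ∀ x : Finset (Fin n), x.Nonempty → x.card ≤ t - k → x ∈ Δ) := by
  have h1c : (0:ℝ) < 1 - c := by linarith
  have hent : 0 < entropy c := by
    have l1 : Real.log c < 0 := Real.log_neg hc0 hc1
    have l2 : Real.log (1-c) < 0 := Real.log_neg h1c (by linarith)
    have := mul_pos hc0 (neg_pos.2 l1)
    have := mul_pos h1c (neg_pos.2 l2)
    unfold entropy; nlinarith
  refine ⟨1, one_pos, ?_⟩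
  intro ε hε
  set K : ℝ := (c/(1-c))^k with hK
  set B : ℝ := (k.factorial : ℝ)/(1-c)^k with hB
  set C : ℝ := entropy c * k.factorial / (1-c)^k with hC
  have hKpos : 0 < K := by positivity
  have hBpos : 0 < B := by positivity
  have hCpos : 0 < C := by
    have : (0:ℝ) < k.factorial := by positivity
    rw [hC]; positivity
  refine ⟨max 1 (max (⌈((k:ℝ)+1)/c⌉₊ + 1) (max (⌈C+B⌉₊ + 1) (⌈K/ε⌉₊ + 1))), ?_⟩
  intro n hn t ht
  have hn1 : 1 ≤ n := le_trans (le_max_left _ _) hn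
  have hnR : (0:ℝ) < n := by exact_mod_cast hn1
  have hceil : ∀ x : ℝ, ⌈x⌉₊ + 1 ≤ n → x < n := by
    intro x h
    refine lt_of_le_of_lt (Nat.le_ceil x) ?_
    exact_mod_cast Nat.lt_of_lt_of_le (Nat.lt_succ_self _) h
  have hb : ((k:ℝ)+1)/c < n :=
    hceil _ (le_trans (le_trans (le_max_left _ _) (le_max_right _ _)) hn)
  have hcn : (k:ℝ)+1 < c * n := by
    rw [div_lt_iff₀ hc0] at hb; linarith [hb]
  have hd : C + B < n :=
    hceil _ (le_trans (le_trans (le_trans (le_max_left _ _) (le_max_right _ _)) (le_max_right _ _)) hn)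
  have he : K/ε < n :=
    hceil _ (le_trans (le_trans (le_trans (le_max_right _ _) (le_max_right _ _)) (le_max_right _ _)) hn)
  have hkt : k ≤ t := by
    have hkr : (k:ℝ) ≤ (t:ℝ) := by rw [ht]; linarith
    exact_mod_cast hkr
  have htn : t ≤ n := by
    have : (t:ℝ) ≤ n := by rw [ht]; nlinarith
    exact_mod_cast this
  have hlogn : 0 ≤ Real.log n := Real.log_nonneg (by exact_mod_cast hn1)
  set p : ℝ := (1 / (n : ℝ) ^ (k - 1)) *
      (entropy c * k.factorial / (1 - c) ^ k +
        1 * (k.factorial : ℝ) / (1 - c) ^ k * Real.log n / n) with hp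
  have hpow_pos : (0:ℝ) < (n:ℝ) ^ (k-1) := by positivity
  have hp0 : 0 ≤ p := by
    rw [hp]
    have : (0:ℝ) ≤ entropy c * k.factorial / (1 - c) ^ k := by positivity
    have h2 : (0:ℝ) ≤ 1 * (k.factorial : ℝ) / (1 - c) ^ k * Real.log n / n := by positivity
    positivity
  have hnpow : (n:ℝ) ≤ (n:ℝ) ^ (k-1) := by
    calc (n:ℝ) = (n:ℝ)^1 := (pow_one _).symm
      _ ≤ (n:ℝ)^(k-1) := pow_le_pow_right₀ (by exact_mod_cast hn1) (by omega)
  have hp1 : p ≤ 1 := by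
    have hlog_le : Real.log n / n ≤ 1 := by
      rw [div_le_one hnR]
      linarith [Real.log_le_sub_one_of_pos hnR]
    have hsum : entropy c * k.factorial / (1 - c) ^ k +
        1 * (k.factorial : ℝ) / (1 - c) ^ k * Real.log n / n ≤ C + B := by
      rw [hC, hB]
      have : 1 * (k.factorial : ℝ) / (1 - c) ^ k * Real.log n / n
          = ((k.factorial : ℝ) / (1 - c) ^ k) * (Real.log n / n) := by ring
      rw [this]
      nlinarith [hBpos]
    rw [hp]
    have h1 : (1 / (n : ℝ) ^ (k - 1)) ≤ 1 / n := by
      apply div_le_div_of_nonneg_left one_pos.le hnR hnpow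
    calc (1 / (n : ℝ) ^ (k - 1)) * _ ≤ (1/(n:ℝ)) * (C + B) := by
          apply mul_le_mul h1 hsum ?_ (by positivity)
          positivity
      _ ≤ 1 := by rw [one_div, inv_mul_le_iff₀ hnR]; linarith
  have hub := union_bound n t k p hp0 hp1 htn hkt
  rw [hp] at hub
  refine le_trans ?_ hub
  have hX : (n.choose (t-k) : ℝ) * (1-p) ^ ((n-(t-k)).choose k) ≤ ε := by
    have hsub : n - (t-k) = (n-t)+k := by omega
    have hntR : ((n-t:ℕ):ℝ) = (1-c)*n := by
      have h' : ((n-t:ℕ):ℝ) = (n:ℝ) - t := by push_cast [htn]; ring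
      rw [h', ht]; ring
    have hm : ((1-c)*n)^k / k.factorial ≤ ((n-(t-k)).choose k : ℝ) := by
      rw [hsub, ← hntR]
      exact pow_div_le_choose (n-t) k
    have hA : (n.choose (t-k) : ℝ) ≤ K * Real.exp (n * entropy c) := by
      refine (choose_sub_le c hc0 hc1 n t ht hn1 k hkt).trans ?_
      rw [hK]
      exact mul_le_mul_of_nonneg_left (choose_le_exp_entropy c hc0 hc1 n t ht htn) (by positivity)
    have hiden : p * (((1-c)*n)^k / k.factorial) = n * entropy c + Real.log n := by
      have hnk : (n:ℝ)^(k-1) * n = (n:ℝ)^k := by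
        rw [← pow_succ]; congr 1; omega
      have hfac : (k.factorial : ℝ) ≠ 0 := by positivity
      have h1ck : ((1:ℝ)-c)^k ≠ 0 := by positivity
      have hnk' : (n:ℝ)^(k-1) = (n:ℝ)^k / n := by
        rw [eq_div_iff (ne_of_gt hnR)]; exact hnk
      have hnkne : ((n:ℝ))^k ≠ 0 := by positivity
      rw [hp, mul_pow, hnk']
      field_simp
    have hpm : n * entropy c + Real.log n ≤ p * ((n-(t-k)).choose k : ℝ) := by
      rw [← hiden]
      exact mul_le_mul_of_nonneg_left hm hp0
    have hBexp : (1-p) ^ ((n-(t-k)).choose k)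
        ≤ Real.exp (-(p * ((n-(t-k)).choose k : ℝ))) := by
      have h1p : 1 - p ≤ Real.exp (-p) := by linarith [Real.add_one_le_exp (-p)]
      calc (1-p) ^ ((n-(t-k)).choose k) ≤ (Real.exp (-p)) ^ ((n-(t-k)).choose k) :=
            pow_le_pow_left₀ (by linarith) h1p _
        _ = Real.exp (-(p * ((n-(t-k)).choose k : ℝ))) := by
            rw [← Real.exp_nat_mul]; congr 1; ring
    calc (n.choose (t-k) : ℝ) * (1-p) ^ ((n-(t-k)).choose k)
        ≤ (K * Real.exp (n * entropy c)) * Real.exp (-(p * ((n-(t-k)).choose k : ℝ))) := by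
          refine mul_le_mul hA hBexp (pow_nonneg (by linarith) _) (by positivity)
      _ ≤ (K * Real.exp (n * entropy c)) * Real.exp (-(n * entropy c + Real.log n)) := by
          refine mul_le_mul_of_nonneg_left ?_ (by positivity)
          exact Real.exp_le_exp.2 (by linarith [hpm])
      _ = K * Real.exp (-Real.log n) := by
          rw [mul_assoc, ← Real.exp_add]
          congr 2
          ring
      _ = K / n := by rw [Real.exp_neg, Real.exp_log hnR]; ring
      _ ≤ ε := by
          rw [div_le_iff₀ hnR]
          rw [div_lt_iff₀ hε] at he
          linarith
  linarith
end
end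

section
/- Let k : ℕ → ℤ be any function. For Δ drawn from U(n), the probability that χ(Δ) = k(n) tends to 0 as n → ∞; i.e., with high probability χ(Δ) ≠ k(n). -/
open scoped Classical

noncomputable section

/-- `Δ` is a simplicial complex on vertex set `Fin n`: all faces are nonempty
and it is downward closed. -/
def IsComplex {n : ℕ} (Δ : Finset (Finset (Fin n))) : Prop :=
  (∀ x ∈ Δ, x.Nonempty) ∧
    ∀ x ∈ Δ, ∀ y : Finset (Fin n), y.Nonempty → y ⊆ x → y ∈ Δ

/-- The finite set of all simplicial complexes on `n` vertices. -/
def allComplexes (n : ℕ) : Finset (Finset (Finset (Fin n))) :=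
  Finset.univ.filter IsComplex

/-- The probability, under the uniform measure `U(n)` on all simplicial
complexes on `n` vertices, of the event `P`. -/
def uniformProb (n : ℕ) (P : Finset (Finset (Fin n)) → Prop) : ℝ :=
  (((allComplexes n).filter P).card : ℝ) / ((allComplexes n).card : ℝ)

/-- The Euler characteristic `χ(Δ) = Σ_{i ≥ 1} (-1)^{i-1} f_i(Δ)`, computed as a
sum over the faces of `Δ`. -/
def eulerChar {n : ℕ} (Δ : Finset (Finset (Fin n))) : ℤ :=
  ∑ x ∈ Δ, (-1 : ℤ) ^ (x.card - 1)

lemma central_sq (k : ℕ) : (2*k+1) * (Nat.centralBinom k)^2 ≤ 16^k := by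
  induction k with
  | zero => simp [Nat.centralBinom]
  | succ k ih =>
    have h : (k+1) * Nat.centralBinom (k+1) = 2*(2*k+1) * Nat.centralBinom k :=
      Nat.succ_mul_centralBinom_succ k
    have sq : ((k+1) * Nat.centralBinom (k+1))^2 = (2*(2*k+1) * Nat.centralBinom k)^2 := by
      rw [h]
    have key : (k+1)^2 * ((2*(k+1)+1) * (Nat.centralBinom (k+1))^2)
        ≤ (k+1)^2 * 16^(k+1) := by
      calc (k+1)^2 * ((2*(k+1)+1) * (Nat.centralBinom (k+1))^2)
          = (2*(k+1)+1) * ((k+1) * Nat.centralBinom (k+1))^2 := by ring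
        _ = (2*(k+1)+1) * (2*(2*k+1) * Nat.centralBinom k)^2 := by rw [sq]
        _ = (4*(2*k+3)*(2*k+1)) * ((2*k+1) * (Nat.centralBinom k)^2) := by ring
        _ ≤ (4*(2*k+3)*(2*k+1)) * 16^k := Nat.mul_le_mul_left _ ih
        _ ≤ (16*(k+1)^2) * 16^k := Nat.mul_le_mul_right _ (by nlinarith)
        _ = (k+1)^2 * 16^(k+1) := by ring
    exact Nat.le_of_mul_le_mul_left key (by positivity)

lemma choose_half_sq (t : ℕ) : (t+1) * (t.choose (t/2))^2 ≤ 4^t := by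
  rcases Nat.even_or_odd t with ⟨k, hk⟩ | ⟨k, hk⟩
  · subst hk
    rw [show k + k = 2*k by ring, show (2*k)/2 = k by omega]
    calc (2*k+1) * ((2*k).choose k)^2 = (2*k+1) * (Nat.centralBinom k)^2 := rfl
      _ ≤ 16^k := central_sq k
      _ = 4^(2*k) := by rw [show (16:ℕ) = 4^2 by norm_num, ← pow_mul]
  · subst hk
    rw [show (2*k+1)/2 = k by omega]
    have hsymm : (2*k+1).choose (k+1) = (2*k+1).choose k := by
      have h := Nat.choose_symm (show k+1 ≤ 2*k+1 by omega)
      rw [show 2*k+1-(k+1) = k by omega] at h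
      exact h.symm
    have hpas : Nat.centralBinom (k+1) = 2 * (2*k+1).choose k := by
      have h1 : ((2*k+1)+1).choose (k+1) = (2*k+1).choose k + (2*k+1).choose (k+1) :=
        Nat.choose_succ_succ (2*k+1) k
      unfold Nat.centralBinom
      rw [show 2*(k+1) = (2*k+1)+1 by ring, h1, hsymm]
      ring
    have hc := central_sq (k+1)
    rw [hpas] at hc
    have h16 : (16:ℕ)^(k+1) = 4^(2*k+1) * 4 := by
      rw [show (16:ℕ) = 4^2 by norm_num, ← pow_mul, show 2*(k+1) = (2*k+1)+1 by ring, pow_succ]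
    rw [h16] at hc
    have hc2 : ((2*k+1+1) * ((2*k+1).choose k)^2) * 4 ≤ (4^(2*k+1)) * 4 := by
      calc ((2*k+1+1) * ((2*k+1).choose k)^2) * 4
          ≤ (2*(k+1)+1) * (2 * (2*k+1).choose k)^2 := by nlinarith
        _ ≤ 4^(2*k+1) * 4 := hc
    exact Nat.le_of_mul_le_mul_right hc2 (by norm_num)

lemma choose_le_pow' (N j : ℕ) : N.choose j ≤ N^j := by
  induction j with
  | zero => simp
  | succ j ih =>
    have h := Nat.choose_succ_right_eq N j
    have h1 : N.choose (j+1) ≤ N.choose (j+1) * (j+1) := Nat.le_mul_of_pos_right _ (by omega)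
    calc N.choose (j+1) ≤ N.choose (j+1) * (j+1) := h1
      _ = N.choose j * (N - j) := h
      _ ≤ N^j * N := Nat.mul_le_mul ih (Nat.sub_le _ _)
      _ = N^(j+1) := by rw [pow_succ]

def Tset {n : ℕ} (i : ℕ) (Δ : Finset (Finset (Fin n))) : Finset (Finset (Fin n)) :=
  Finset.univ.filter fun x => x.card = i ∧
    (∀ y : Finset (Fin n), y.Nonempty → y ⊂ x → y ∈ Δ) ∧ ∀ z ∈ Δ, ¬ x ⊂ z

lemma mem_Tset {n : ℕ} {i : ℕ} {Δ : Finset (Finset (Fin n))} {x : Finset (Fin n)} :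
    x ∈ Tset i Δ ↔ x.card = i ∧
      (∀ y : Finset (Fin n), y.Nonempty → y ⊂ x → y ∈ Δ) ∧ ∀ z ∈ Δ, ¬ x ⊂ z := by
  simp [Tset]

lemma Tset_congr {n : ℕ} {i : ℕ} {Δ Δ' : Finset (Finset (Fin n))}
    (h : ∀ x : Finset (Fin n), x.card ≠ i → (x ∈ Δ ↔ x ∈ Δ')) :
    Tset i Δ = Tset i Δ' := by
  ext x
  simp only [mem_Tset]
  constructor
  · rintro ⟨hc, h2, h3⟩
    refine ⟨hc, fun y hy hyx => ?_, fun z hz hxz => ?_⟩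
    · have : y.card ≠ i := by have := Finset.card_lt_card hyx; omega
      exact (h y this).mp (h2 y hy hyx)
    · have : z.card ≠ i := by have := Finset.card_lt_card hxz; omega
      exact h3 z ((h z this).mpr hz) hxz
  · rintro ⟨hc, h2, h3⟩
    refine ⟨hc, fun y hy hyx => ?_, fun z hz hxz => ?_⟩
    · have : y.card ≠ i := by have := Finset.card_lt_card hyx; omega
      exact (h y this).mpr (h2 y hy hyx)
    · have : z.card ≠ i := by have := Finset.card_lt_card hxz; omega
      exact h3 z ((h z this).mp hz) hxz

variable {n : ℕ} {i : ℕ} {Δ R : Finset (Finset (Fin n))}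

lemma toggle_congr (hR : R ⊆ Tset i Δ) (x : Finset (Fin n)) (hx : x.card ≠ i) :
    (x ∈ Δ ↔ x ∈ (Δ \ Tset i Δ) ∪ R) := by
  constructor
  · intro h
    exact Finset.mem_union_left _ (Finset.mem_sdiff.mpr
      ⟨h, fun hT => hx (mem_Tset.mp hT).1⟩)
  · intro h
    rcases Finset.mem_union.mp h with h | h
    · exact (Finset.mem_sdiff.mp h).1
    · exact absurd (mem_Tset.mp (hR h)).1 hx

lemma Tset_toggle (hR : R ⊆ Tset i Δ) : Tset i ((Δ \ Tset i Δ) ∪ R) = Tset i Δ :=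
  (Tset_congr (fun x hx => toggle_congr hR x hx)).symm

lemma toggle_isComplex (hi : 1 ≤ i) (hΔ : IsComplex Δ) (hR : R ⊆ Tset i Δ) :
    IsComplex ((Δ \ Tset i Δ) ∪ R) := by
  constructor
  · intro x hx
    rcases Finset.mem_union.mp hx with h | h
    · exact hΔ.1 x (Finset.mem_sdiff.mp h).1
    · have hc := (mem_Tset.mp (hR h)).1
      exact Finset.card_pos.mp (by omega)
  · intro x hx y hy hyx
    rcases Finset.mem_union.mp hx with h | h
    · have hxΔ : x ∈ Δ := (Finset.mem_sdiff.mp h).1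
      have hyΔ : y ∈ Δ := hΔ.2 x hxΔ y hy hyx
      refine Finset.mem_union_left _ (Finset.mem_sdiff.mpr ⟨hyΔ, fun hT => ?_⟩)
      rcases eq_or_ne y x with rfl | hne
      · exact (Finset.mem_sdiff.mp h).2 hT
      · exact (mem_Tset.mp hT).2.2 x hxΔ (Finset.ssubset_iff_subset_ne.mpr ⟨hyx, hne⟩)
    · have hT := mem_Tset.mp (hR h)
      rcases eq_or_ne y x with rfl | hne
      · exact Finset.mem_union_right _ h
      have hss : y ⊂ x := Finset.ssubset_iff_subset_ne.mpr ⟨hyx, hne⟩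
      · have hyΔ : y ∈ Δ := hT.2.1 y hy hss
        refine Finset.mem_union_left _ (Finset.mem_sdiff.mpr ⟨hyΔ, fun hyT => ?_⟩)
        have h1 := Finset.card_lt_card hss
        have h2 := (mem_Tset.mp hyT).1
        omega

lemma toggle_sdiff (hR : R ⊆ Tset i Δ) :
    ((Δ \ Tset i Δ) ∪ R) \ Tset i ((Δ \ Tset i Δ) ∪ R) = Δ \ Tset i Δ := by
  rw [Tset_toggle hR]
  ext x
  simp only [Finset.mem_sdiff, Finset.mem_union]
  constructor
  · rintro ⟨h | h, hT⟩
    · exact h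
    · exact absurd (hR h) hT
  · rintro ⟨hΔ', hT⟩
    exact ⟨Or.inl ⟨hΔ', hT⟩, hT⟩

lemma toggle_eulerChar (hR : R ⊆ Tset i Δ) :
    eulerChar ((Δ \ Tset i Δ) ∪ R) = eulerChar (Δ \ Tset i Δ) + (-1)^(i-1) * R.card := by
  have hdisj : Disjoint (Δ \ Tset i Δ) R := by
    refine Finset.disjoint_left.mpr fun a ha haR => ?_
    exact (Finset.mem_sdiff.mp ha).2 (hR haR)
  unfold eulerChar
  rw [Finset.sum_union hdisj]
  congr 1
  calc ∑ x ∈ R, (-1:ℤ)^(x.card - 1) = ∑ x ∈ R, (-1:ℤ)^(i-1) := by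
        refine Finset.sum_congr rfl fun x hx => ?_
        rw [(mem_Tset.mp (hR hx)).1]
    _ = (-1:ℤ)^(i-1) * R.card := by rw [Finset.sum_const, nsmul_eq_mul, mul_comm]

-- begin p3
lemma mem_allComplexes {n : ℕ} {Δ : Finset (Finset (Fin n))} :
    Δ ∈ allComplexes n ↔ IsComplex Δ := by simp [allComplexes]

section Fiber

variable {n i : ℕ}

/-- The fiber of the class map over `Δ₀` inside `F`. -/
lemma fiber_eq (hi : 1 ≤ i) {m : ℕ} {Δ₀ : Finset (Finset (Fin n))}
    (h0 : Δ₀ ∈ (allComplexes n).filter (fun Δ => m ≤ (Tset i Δ).card)) :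
    ((allComplexes n).filter (fun Δ => m ≤ (Tset i Δ).card)).filter
        (fun Δ => Δ \ Tset i Δ = Δ₀ \ Tset i Δ₀)
      = (Tset i Δ₀).powerset.image (fun R => (Δ₀ \ Tset i Δ₀) ∪ R) := by
  obtain ⟨hall, hm⟩ := Finset.mem_filter.mp h0
  have hcpx : IsComplex Δ₀ := mem_allComplexes.mp hall
  ext Δ'
  simp only [Finset.mem_filter, Finset.mem_image, Finset.mem_powerset]
  constructor
  · rintro ⟨⟨hall', hm'⟩, hκ⟩
    have hT : Tset i Δ' = Tset i Δ₀ := by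
      apply Tset_congr
      intro x hx
      constructor
      · intro hxΔ'
        have hxv : x ∈ Δ' \ Tset i Δ' := Finset.mem_sdiff.mpr
          ⟨hxΔ', fun hT => hx (mem_Tset.mp hT).1⟩
        rw [hκ] at hxv
        exact (Finset.mem_sdiff.mp hxv).1
      · intro hxΔ₀
        have hxv : x ∈ Δ₀ \ Tset i Δ₀ := Finset.mem_sdiff.mpr
          ⟨hxΔ₀, fun hT => hx (mem_Tset.mp hT).1⟩
        rw [← hκ] at hxv
        exact (Finset.mem_sdiff.mp hxv).1
    refine ⟨Δ' ∩ Tset i Δ₀, Finset.inter_subset_right, ?_⟩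
    ext x
    simp only [Finset.mem_union, Finset.mem_inter]
    constructor
    · rintro (hx | ⟨hx, _⟩)
      · rw [← hκ] at hx; exact (Finset.mem_sdiff.mp hx).1
      · exact hx
    · intro hx
      by_cases hxT : x ∈ Tset i Δ₀
      · exact Or.inr ⟨hx, hxT⟩
      · exact Or.inl (by rw [← hκ]; exact Finset.mem_sdiff.mpr ⟨hx, hT ▸ hxT⟩)
  · rintro ⟨R, hR, rfl⟩
    refine ⟨⟨mem_allComplexes.mpr (toggle_isComplex hi hcpx hR), ?_⟩, ?_⟩
    · rw [Tset_toggle hR]; exact hm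
    · rw [toggle_sdiff hR]

lemma fiber_card (hi : 1 ≤ i) {m : ℕ} {Δ₀ : Finset (Finset (Fin n))}
    (h0 : Δ₀ ∈ (allComplexes n).filter (fun Δ => m ≤ (Tset i Δ).card)) :
    (((allComplexes n).filter (fun Δ => m ≤ (Tset i Δ).card)).filter
        (fun Δ => Δ \ Tset i Δ = Δ₀ \ Tset i Δ₀)).card
      = 2 ^ (Tset i Δ₀).card := by
  rw [fiber_eq hi h0]
  rw [Finset.card_image_of_injOn, Finset.card_powerset]
  intro R₁ h₁ R₂ h₂ hEq
  simp only [Finset.coe_powerset, Set.mem_preimage, Set.mem_powerset_iff,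
    Finset.coe_subset] at h₁ h₂
  have key : ∀ R : Finset (Finset (Fin n)), R ⊆ Tset i Δ₀ →
      ((Δ₀ \ Tset i Δ₀) ∪ R) ∩ Tset i Δ₀ = R := by
    intro R hRs
    ext x
    simp only [Finset.mem_inter, Finset.mem_union, Finset.mem_sdiff]
    constructor
    · rintro ⟨⟨hx, hnx⟩ | hx, hxT⟩
      · exact absurd hxT hnx
      · exact hx
    · intro hx
      exact ⟨Or.inr hx, hRs hx⟩
  have h3 := congrArg (fun S => S ∩ Tset i Δ₀) hEq
  simpa [key R₁ h₁, key R₂ h₂] using h3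

lemma fiber_filter_card (hi : 1 ≤ i) {m : ℕ} {Δ₀ : Finset (Finset (Fin n))} (k : ℤ)
    (h0 : Δ₀ ∈ (allComplexes n).filter (fun Δ => m ≤ (Tset i Δ).card)) :
    ((((allComplexes n).filter (fun Δ => m ≤ (Tset i Δ).card)).filter
        (fun Δ => Δ \ Tset i Δ = Δ₀ \ Tset i Δ₀)).filter
          (fun Δ => eulerChar Δ = k)).card
      ≤ ((Tset i Δ₀).card).choose ((Tset i Δ₀).card / 2) := by
  rw [fiber_eq hi h0]
  set t := (Tset i Δ₀).card
  set v := Δ₀ \ Tset i Δ₀ with hv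
  set P := (Tset i Δ₀).powerset.filter
    (fun R => eulerChar (v ∪ R) = k) with hP
  have hsub0 : ((Tset i Δ₀).powerset.image (fun R => v ∪ R)).filter
      (fun Δ => eulerChar Δ = k) ⊆ P.image (fun R => v ∪ R) := by
    intro Δ' hΔ'
    obtain ⟨hmem, hχ⟩ := Finset.mem_filter.mp hΔ'
    obtain ⟨R, hRp, rfl⟩ := Finset.mem_image.mp hmem
    exact Finset.mem_image.mpr ⟨R, Finset.mem_filter.mpr ⟨hRp, hχ⟩, rfl⟩
  calc (((Tset i Δ₀).powerset.image (fun R => v ∪ R)).filter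
      (fun Δ => eulerChar Δ = k)).card
      ≤ (P.image (fun R => v ∪ R)).card := Finset.card_le_card hsub0
    _ ≤ P.card := Finset.card_image_le
    _ ≤ t.choose (t/2) := by
        rcases P.eq_empty_or_nonempty with hPe | ⟨R₀, hR₀⟩
        · simp [hPe]
        · obtain ⟨hR₀p, hR₀χ⟩ := Finset.mem_filter.mp hR₀
          have hR₀s := Finset.mem_powerset.mp hR₀p
          have hsub : P ⊆ (Tset i Δ₀).powersetCard R₀.card := by
            intro R hRmem
            obtain ⟨hRp, hRχ⟩ := Finset.mem_filter.mp hRmem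
            have hRs := Finset.mem_powerset.mp hRp
            rw [toggle_eulerChar hRs] at hRχ
            rw [toggle_eulerChar hR₀s] at hR₀χ
            have : ((-1:ℤ))^(i-1) * R.card = ((-1:ℤ))^(i-1) * R₀.card := by
              omega
            have hcard : (R.card : ℤ) = R₀.card :=
              mul_left_cancel₀ (by positivity) this
            have : R.card = R₀.card := by exact_mod_cast hcard
            exact Finset.mem_powersetCard.mpr ⟨hRs, this⟩
          calc P.card ≤ ((Tset i Δ₀).powersetCard R₀.card).card :=
                Finset.card_le_card hsub
            _ = t.choose R₀.card := Finset.card_powersetCard _ _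
            _ ≤ t.choose (t/2) := Nat.choose_le_middle _ _

end Fiber

lemma choose_mul_le_two_pow {t m c : ℕ} (hm : m ≤ t) (hc : c^2 ≤ m + 1) :
    t.choose (t/2) * c ≤ 2^t := by
  have h1 : (t.choose (t/2) * c)^2 ≤ (2^t)^2 := by
    calc (t.choose (t/2) * c)^2 = (t.choose (t/2))^2 * c^2 := by ring
      _ ≤ (t.choose (t/2))^2 * (t+1) := Nat.mul_le_mul_left _ (by omega)
      _ = (t+1) * (t.choose (t/2))^2 := by ring
      _ ≤ 4^t := choose_half_sq t
      _ = (2^t)^2 := by rw [show (4:ℕ) = 2^2 by norm_num, ← pow_mul, ← pow_mul, Nat.mul_comm]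
  exact (Nat.pow_le_pow_iff_left (by norm_num)).mp h1

lemma per_i_bound {n i : ℕ} (hi : 1 ≤ i) (m c : ℕ) (hc : c^2 ≤ m + 1) (k : ℤ) :
    (((allComplexes n).filter (fun Δ => m ≤ (Tset i Δ).card)).filter
        (fun Δ => eulerChar Δ = k)).card * c
      ≤ ((allComplexes n).filter (fun Δ => m ≤ (Tset i Δ).card)).card := by
  set F := (allComplexes n).filter (fun Δ => m ≤ (Tset i Δ).card) with hF
  set κ := fun Δ : Finset (Finset (Fin n)) => Δ \ Tset i Δ with hκ
  have hmapE : ∀ Δ ∈ F.filter (fun Δ => eulerChar Δ = k), κ Δ ∈ F.image κ :=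
    fun Δ h => Finset.mem_image_of_mem _ (Finset.filter_subset _ _ h)
  have hmapF : ∀ Δ ∈ F, κ Δ ∈ F.image κ := fun Δ h => Finset.mem_image_of_mem _ h
  rw [Finset.card_eq_sum_card_fiberwise hmapE, Finset.card_eq_sum_card_fiberwise hmapF,
    Finset.sum_mul]
  apply Finset.sum_le_sum
  intro v hv
  obtain ⟨Δ₀, hΔ₀, rfl⟩ := Finset.mem_image.mp hv
  have hswap : (F.filter (fun Δ => eulerChar Δ = k)).filter (fun Δ => κ Δ = κ Δ₀)
      = (F.filter (fun Δ => κ Δ = κ Δ₀)).filter (fun Δ => eulerChar Δ = k) :=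
    Finset.filter_comm _ _ _
  rw [hswap]
  have hm : m ≤ (Tset i Δ₀).card := (Finset.mem_filter.mp hΔ₀).2
  calc ((F.filter (fun Δ => κ Δ = κ Δ₀)).filter (fun Δ => eulerChar Δ = k)).card * c
      ≤ ((Tset i Δ₀).card).choose ((Tset i Δ₀).card / 2) * c :=
        Nat.mul_le_mul_right _ (fiber_filter_card hi k hΔ₀)
    _ ≤ 2 ^ (Tset i Δ₀).card := choose_mul_le_two_pow hm hc
    _ = (F.filter (fun Δ => κ Δ = κ Δ₀)).card := (fiber_card hi hΔ₀).symm

-- p4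
def facets {n : ℕ} (Δ : Finset (Finset (Fin n))) : Finset (Finset (Fin n)) :=
  Δ.filter fun x => ∀ z ∈ Δ, ¬ x ⊂ z

lemma exists_facet {n : ℕ} {Δ : Finset (Finset (Fin n))} {x : Finset (Fin n)}
    (hx : x ∈ Δ) : ∃ z ∈ facets Δ, x ⊆ z := by
  have hne : (Δ.filter (fun w => x ⊆ w)).Nonempty := ⟨x, Finset.mem_filter.mpr ⟨hx, le_refl x⟩⟩
  obtain ⟨z, hz, hzmax⟩ : ∃ z ∈ Δ.filter (fun w => x ⊆ w), ∀ w ∈ Δ.filter (fun w => x ⊆ w), ¬ z < w := by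
    obtain ⟨z, hz⟩ := Finset.exists_maximal hne
    exact ⟨z, hz.1, fun w hw hzw => lt_irrefl z (lt_of_lt_of_le hzw (hz.2 hw hzw.le))⟩
  obtain ⟨hzΔ, hxz⟩ := Finset.mem_filter.mp hz
  refine ⟨z, Finset.mem_filter.mpr ⟨hzΔ, fun w hw hzw => ?_⟩, hxz⟩
  exact hzmax w (Finset.mem_filter.mpr ⟨hw, hxz.trans hzw.subset⟩) hzw

lemma facets_inj {n : ℕ} {Δ Δ' : Finset (Finset (Fin n))}
    (hΔ : IsComplex Δ) (hΔ' : IsComplex Δ') (h : facets Δ = facets Δ') : Δ = Δ' := by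
  have key : ∀ (A B : Finset (Finset (Fin n))), IsComplex A → IsComplex B →
      facets A = facets B → A ⊆ B := by
    intro A B hA hB hfab x hx
    obtain ⟨z, hz, hxz⟩ := exists_facet hx
    rw [hfab] at hz
    have hzB : z ∈ B := Finset.mem_filter.mp hz |>.1
    exact hB.2 z hzB x (hA.1 x hx) hxz
  exact Finset.Subset.antisymm (key _ _ hΔ hΔ' h) (key _ _ hΔ' hΔ h.symm)

lemma facet_mem_Tset {n : ℕ} {Δ : Finset (Finset (Fin n))} {x : Finset (Fin n)}
    (hΔ : IsComplex Δ) (hx : x ∈ facets Δ) : x ∈ Tset x.card Δ := by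
  obtain ⟨hxΔ, hmax⟩ := Finset.mem_filter.mp hx
  exact mem_Tset.mpr ⟨rfl, fun y hy hyx => hΔ.2 x hxΔ y hy hyx.subset, hmax⟩

lemma facets_card_le {n : ℕ} {Δ : Finset (Finset (Fin n))} (hΔ : IsComplex Δ) {M : ℕ}
    (h : ∀ i ∈ Finset.Icc 1 n, (Tset i Δ).card ≤ M) : (facets Δ).card ≤ n * M := by
  have hmap : ∀ x ∈ facets Δ, x.card ∈ Finset.Icc 1 n := by
    intro x hx
    have hxΔ : x ∈ Δ := Finset.mem_filter.mp hx |>.1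
    have h1 : 1 ≤ x.card := Finset.card_pos.mpr (hΔ.1 x hxΔ)
    have h2 : x.card ≤ n := by
      have := Finset.card_le_univ x
      simpa using this
    exact Finset.mem_Icc.mpr ⟨h1, h2⟩
  rw [Finset.card_eq_sum_card_fiberwise hmap]
  calc ∑ i ∈ Finset.Icc 1 n, ((facets Δ).filter (fun x => x.card = i)).card
      ≤ ∑ i ∈ Finset.Icc 1 n, M := by
        apply Finset.sum_le_sum
        intro i hi
        have hsub : (facets Δ).filter (fun x => x.card = i) ⊆ Tset i Δ := by
          intro x hx
          obtain ⟨hxf, hxc⟩ := Finset.mem_filter.mp hx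
          have := facet_mem_Tset hΔ hxf
          rwa [hxc] at this
        exact le_trans (Finset.card_le_card hsub) (h i hi)
    _ = n * M := by rw [Finset.sum_const, Nat.card_Icc]; simp [Nat.smul_one_eq_cast]

lemma small_count {n M : ℕ} :
    ((allComplexes n).filter (fun Δ => (facets Δ).card ≤ M)).card
      ≤ (M+1) * (2^n)^M := by
  have hinj : ((allComplexes n).filter (fun Δ => (facets Δ).card ≤ M)).card
      ≤ ((Finset.univ : Finset (Finset (Finset (Fin n)))).filter
          (fun s => s.card ≤ M)).card := by
    apply Finset.card_le_card_of_injOn facets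
    · intro Δ hΔ
      exact Finset.mem_filter.mpr ⟨Finset.mem_univ _, (Finset.mem_filter.mp hΔ).2⟩
    · intro Δ₁ h₁ Δ₂ h₂ hEq
      have c₁ := mem_allComplexes.mp (Finset.mem_filter.mp (Finset.mem_coe.mp h₁)).1
      have c₂ := mem_allComplexes.mp (Finset.mem_filter.mp (Finset.mem_coe.mp h₂)).1
      exact facets_inj c₁ c₂ hEq
  refine le_trans hinj ?_
  have hmap : ∀ s ∈ (Finset.univ : Finset (Finset (Finset (Fin n)))).filter
      (fun s => s.card ≤ M), s.card ∈ Finset.range (M+1) := by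
    intro s hs
    have := (Finset.mem_filter.mp hs).2
    exact Finset.mem_range.mpr (by omega)
  rw [Finset.card_eq_sum_card_fiberwise hmap]
  calc ∑ j ∈ Finset.range (M+1),
        (((Finset.univ : Finset (Finset (Finset (Fin n)))).filter
          (fun s => s.card ≤ M)).filter (fun s => s.card = j)).card
      ≤ ∑ j ∈ Finset.range (M+1), (2^n)^M := by
        apply Finset.sum_le_sum
        intro j hj
        have hsub : (((Finset.univ : Finset (Finset (Finset (Fin n)))).filter
            (fun s => s.card ≤ M)).filter (fun s => s.card = j))
            ⊆ Finset.powersetCard j (Finset.univ : Finset (Finset (Fin n))) := by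
          intro s hs
          have := (Finset.mem_filter.mp hs).2
          exact Finset.mem_powersetCard.mpr ⟨Finset.subset_univ _, this⟩
        calc (((Finset.univ : Finset (Finset (Finset (Fin n)))).filter
            (fun s => s.card ≤ M)).filter (fun s => s.card = j)).card
            ≤ (Finset.powersetCard j (Finset.univ : Finset (Finset (Fin n)))).card :=
              Finset.card_le_card hsub
          _ = ((Finset.univ : Finset (Finset (Fin n))).card).choose j :=
              Finset.card_powersetCard _ _
          _ = (2^n).choose j := by
              rw [Finset.card_univ, Fintype.card_finset, Fintype.card_fin]
          _ ≤ (2^n)^j := choose_le_pow' _ _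
          _ ≤ (2^n)^M := Nat.pow_le_pow_right Nat.one_le_two_pow
              (by exact Nat.lt_succ_iff.mp (Finset.mem_range.mp hj))
    _ = (M+1) * (2^n)^M := by rw [Finset.sum_const, Finset.card_range, smul_eq_mul]

lemma lower_bound {n : ℕ} (hn : 2 ≤ n) :
    2^(n.choose (n/2)) ≤ (allComplexes n).card := by
  classical
  set mid := (Finset.univ : Finset (Finset (Fin n))).filter (fun x => x.card = n/2) with hmid
  have hmidcard : mid.card = n.choose (n/2) := by
    have : mid = Finset.powersetCard (n/2) (Finset.univ : Finset (Fin n)) := by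
      ext x
      simp [hmid, Finset.mem_powersetCard]
    rw [this, Finset.card_powersetCard, Finset.card_univ, Fintype.card_fin]
  have hh : 1 ≤ n/2 := by omega
  set clos := fun S : Finset (Finset (Fin n)) =>
    (Finset.univ : Finset (Finset (Fin n))).filter
      (fun y => y.Nonempty ∧ ∃ x ∈ S, y ⊆ x) with hclos
  have hmem : ∀ S ∈ mid.powerset, clos S ∈ allComplexes n := by
    intro S hS
    refine mem_allComplexes.mpr ⟨?_, ?_⟩
    · intro x hx
      exact ((Finset.mem_filter.mp hx).2).1
    · intro x hx y hy hyx
      obtain ⟨-, -, z, hz, hxz⟩ := Finset.mem_filter.mp hx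
      exact Finset.mem_filter.mpr ⟨Finset.mem_univ _, hy, z, hz, hyx.trans hxz⟩
  have hrec : ∀ S ∈ mid.powerset, ∀ x : Finset (Fin n),
      (x ∈ S ↔ (x ∈ clos S ∧ x.card = n/2)) := by
    intro S hS x
    have hSmid := Finset.mem_powerset.mp hS
    constructor
    · intro hx
      have hcard : x.card = n/2 := (Finset.mem_filter.mp (hSmid hx)).2
      refine ⟨Finset.mem_filter.mpr ⟨Finset.mem_univ _,
        Finset.card_pos.mp (by omega), x, hx, le_refl x⟩, hcard⟩
    · rintro ⟨hx, hcard⟩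
      obtain ⟨-, -, z, hz, hxz⟩ := Finset.mem_filter.mp hx
      have hzcard : z.card = n/2 := (Finset.mem_filter.mp (hSmid hz)).2
      have : x = z := Finset.eq_of_subset_of_card_le hxz (by omega)
      rwa [this]
  have hinj : Set.InjOn clos mid.powerset := by
    intro S₁ h₁ S₂ h₂ hEq
    ext x
    rw [hrec S₁ (Finset.mem_coe.mp h₁) x, hrec S₂ (Finset.mem_coe.mp h₂) x, hEq]
  calc 2^(n.choose (n/2)) = mid.powerset.card := by
        rw [Finset.card_powerset, hmidcard]
    _ ≤ (allComplexes n).card := Finset.card_le_card_of_injOn clos hmem hinj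

-- p5: assembly
lemma allComplexes_card_pos (n : ℕ) : 0 < (allComplexes n).card := by
  refine Finset.card_pos.mpr ⟨∅, mem_allComplexes.mpr ⟨?_, ?_⟩⟩
  · intro x hx; exact absurd hx (Finset.notMem_empty x)
  · intro x hx; exact absurd hx (Finset.notMem_empty x)

lemma arith_helper {n a s S B N : ℕ} (hn : 0 < n) (h1 : a ≤ s + S) (h2 : s ≤ B)
    (h3 : n * B ≤ N) (h4 : S * n^2 ≤ n * N) : a * n ≤ 2 * N := by
  have key : a * n * n ≤ 2 * N * n := by nlinarith
  exact Nat.le_of_mul_le_mul_right key hn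

lemma main_bound {n : ℕ} (hn : 2 ≤ n)
    (hbig : n * ((n*n^4+1) * (2^n)^(n*n^4)) ≤ 2^(n.choose (n/2))) (k : ℤ) :
    ((allComplexes n).filter (fun Δ => eulerChar Δ = k)).card * n
      ≤ 2 * (allComplexes n).card := by
  have hNbig : n * ((n*n^4+1) * (2^n)^(n*n^4)) ≤ (allComplexes n).card :=
    le_trans hbig (lower_bound hn)
  have hdecomp : (allComplexes n).filter (fun Δ => eulerChar Δ = k) ⊆
      ((allComplexes n).filter (fun Δ => (facets Δ).card ≤ n * n^4)) ∪
        (Finset.Icc 1 n).biUnion (fun i =>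
          ((allComplexes n).filter (fun Δ => n^4 ≤ (Tset i Δ).card)).filter
            (fun Δ => eulerChar Δ = k)) := by
    intro Δ hΔ
    obtain ⟨hall, hχ⟩ := Finset.mem_filter.mp hΔ
    by_cases hex : ∃ i ∈ Finset.Icc 1 n, n^4 ≤ (Tset i Δ).card
    · obtain ⟨i, hi, ht⟩ := hex
      exact Finset.mem_union_right _ (Finset.mem_biUnion.mpr
        ⟨i, hi, Finset.mem_filter.mpr ⟨Finset.mem_filter.mpr ⟨hall, ht⟩, hχ⟩⟩)
    · push_neg at hex
      refine Finset.mem_union_left _ (Finset.mem_filter.mpr ⟨hall, ?_⟩)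
      exact facets_card_le (mem_allComplexes.mp hall)
        (fun i hi => le_of_lt (hex i hi))
  have h1 : ((allComplexes n).filter (fun Δ => eulerChar Δ = k)).card
      ≤ ((allComplexes n).filter (fun Δ => (facets Δ).card ≤ n * n^4)).card
        + ∑ i ∈ Finset.Icc 1 n,
            (((allComplexes n).filter (fun Δ => n^4 ≤ (Tset i Δ).card)).filter
              (fun Δ => eulerChar Δ = k)).card :=
    le_trans (Finset.card_le_card hdecomp)
      (le_trans (Finset.card_union_le _ _) (Nat.add_le_add_left Finset.card_biUnion_le _))
  have h2 : ((allComplexes n).filter (fun Δ => (facets Δ).card ≤ n * n^4)).card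
      ≤ (n*n^4+1) * (2^n)^(n*n^4) := small_count
  have h4 : (∑ i ∈ Finset.Icc 1 n,
        (((allComplexes n).filter (fun Δ => n^4 ≤ (Tset i Δ).card)).filter
          (fun Δ => eulerChar Δ = k)).card) * n^2
      ≤ n * (allComplexes n).card := by
    rw [Finset.sum_mul]
    calc ∑ i ∈ Finset.Icc 1 n,
          ((((allComplexes n).filter (fun Δ => n^4 ≤ (Tset i Δ).card)).filter
            (fun Δ => eulerChar Δ = k)).card * n^2)
        ≤ ∑ _i ∈ Finset.Icc 1 n, (allComplexes n).card := by
          apply Finset.sum_le_sum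
          intro i hi
          have hi1 : 1 ≤ i := (Finset.mem_Icc.mp hi).1
          have hc : (n^2)^2 ≤ n^4 + 1 := by
            have : (n^2)^2 = n^4 := by ring
            omega
          exact le_trans (per_i_bound hi1 (n^4) (n^2) hc k)
            (Finset.card_le_card (Finset.filter_subset _ _))
      _ = n * (allComplexes n).card := by
          rw [Finset.sum_const, Nat.card_Icc, smul_eq_mul, Nat.add_sub_cancel]
  exact arith_helper (by omega) h1 h2 hNbig h4


lemma hbig_eventually : ∀ᶠ n : ℕ in Filter.atTop,
    n * ((n*n^4+1) * (2^n)^(n*n^4)) ≤ 2^(n.choose (n/2)) := by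
  have h8 : ∀ᶠ n : ℕ in Filter.atTop, 4*n^8 ≤ 2^n := by
    have ht := tendsto_pow_const_div_const_pow_of_one_lt 8 (one_lt_two (α := ℝ))
    filter_upwards [ht.eventually_lt_const (show (0:ℝ) < 1/4 by norm_num)] with n hn
    rw [div_lt_iff₀ (by positivity)] at hn
    have : (4:ℝ) * n^8 ≤ 2^n := by nlinarith
    exact_mod_cast this
  filter_upwards [h8, Filter.eventually_ge_atTop 2] with n h8n hn2
  set C := n.choose (n/2) with hC
  have hle : 2^n ≤ (n+1) * C := by
    rw [← Nat.sum_range_choose n]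
    calc ∑ j ∈ Finset.range (n+1), n.choose j
        ≤ (Finset.range (n+1)).card • C :=
          Finset.sum_le_card_nsmul _ _ _ (fun j _ => Nat.choose_le_middle j n)
      _ = (n+1) * C := by rw [Finset.card_range, smul_eq_mul]
  have hC7 : 2*n^7 ≤ C := by
    have h : (n+1) * (2*n^7) ≤ (n+1) * C := by
      calc (n+1) * (2*n^7) ≤ (2*n) * (2*n^7) :=
            Nat.mul_le_mul_right _ (by omega)
        _ = 4*n^8 := by ring
        _ ≤ 2^n := h8n
        _ ≤ (n+1) * C := hle
    exact Nat.le_of_mul_le_mul_left h (by omega)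
  have hpow : (2^n)^(n*n^4) = 2^(n^6) := by
    rw [← pow_mul]
    congr 1
    ring
  rw [hpow]
  have hsmall : n * (n*n^4+1) ≤ 2^(n^7) := by
    have h1 : n * (n*n^4+1) = n^6 + n := by ring
    have h2 : n ≤ n^6 := Nat.le_self_pow (by norm_num) n
    have h3 : 2*n^6 ≤ n^7 := by
      calc 2*n^6 ≤ n*n^6 := Nat.mul_le_mul_right _ (by omega)
        _ = n^7 := by ring
    have h4 : n^7 < 2^(n^7) := Nat.lt_two_pow_self
    omega
  calc n * ((n*n^4+1) * 2^(n^6)) = (n * (n*n^4+1)) * 2^(n^6) := by ring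
    _ ≤ 2^(n^7) * 2^(n^6) := Nat.mul_le_mul_right _ hsmall
    _ = 2^(n^7 + n^6) := by rw [pow_add]
    _ ≤ 2^(2*n^7) := Nat.pow_le_pow_right (by norm_num)
        (by have : n^6 ≤ n^7 := Nat.pow_le_pow_right (by omega) (by omega); omega)
    _ ≤ 2^C := Nat.pow_le_pow_right (by norm_num) hC7


/-- For any integer function `k(n)` and `Δ ~ U(n)`, with high probability
`χ(Δ) ≠ k(n)`. -/
theorem stmt11 (k : ℕ → ℤ) :
    Filter.Tendsto (fun n : ℕ => uniformProb n (fun Δ => eulerChar Δ = k n))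
      Filter.atTop (nhds 0) := by
  have hlow : ∀ n : ℕ, 0 ≤ uniformProb n (fun Δ => eulerChar Δ = k n) := by
    intro n
    unfold uniformProb
    positivity
  have hup : ∀ᶠ n : ℕ in Filter.atTop,
      uniformProb n (fun Δ => eulerChar Δ = k n) ≤ 2 / n := by
    filter_upwards [hbig_eventually, Filter.eventually_ge_atTop 2] with n hbig hn2
    have hmb := main_bound hn2 hbig (k n)
    have hN : (0:ℝ) < ((allComplexes n).card : ℝ) := by
      exact_mod_cast allComplexes_card_pos n
    have hn0 : (0:ℝ) < (n:ℝ) := by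
      have : 0 < n := by omega
      exact_mod_cast this
    unfold uniformProb
    rw [div_le_div_iff₀ hN hn0]
    have hfilter : ((allComplexes n).filter (fun Δ => eulerChar Δ = k n)).card
        * n ≤ 2 * (allComplexes n).card := hmb
    have hcast : (((allComplexes n).filter (fun Δ => eulerChar Δ = k n)).card : ℝ)
        * (n:ℝ) ≤ 2 * ((allComplexes n).card : ℝ) := by exact_mod_cast hfilter
    convert hcast using 5
    rfl
  exact tendsto_of_tendsto_of_tendsto_of_le_of_le' tendsto_const_nhds
    (tendsto_const_div_atTop_nhds_zero_nat 2)
    (Filter.Eventually.of_forall hlow) hup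
end
end
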